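/- Fix a real p ∈ (0,1) and an integer K ≥ 2. Let S ⊆ {1,…,K} with |S| = n ≥ 2 and let m ∈ {1,…,K−1}. If both m ∈ S and m+1 ∈ S, then d_S(σ̂_m) = log(1/p)·p^{i−1}·(1−p)²/(1−p^n), where i = |{j ∈ S : j ≤ m}|; otherwise d_S(σ̂_m) = 0. -/

import Mathlib

/-- Ordinal Attraction choice probability of item `i` from display set `S`
under the ranking `σ`: `(1−p)·p^{rank−1}/(1−p^{|S|})`, where the rank of `i`
within `S` under `σ` is `|{j ∈ S : σ j ≤ σ i}|`. -/
noncomputable def oa {K : ℕ} (p : ℝ) (σ : Equiv.Perm (Fin K))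
    (S : Finset (Fin K)) (i : Fin K) : ℝ :=
  (1 - p) * p ^ ((S.filter fun j => σ j ≤ σ i).card - 1) / (1 - p ^ S.card)

/-- `d_S(σ)`: KL divergence on `S` between the OA model with the identity
ranking and the OA model with ranking `σ`. -/
noncomputable def dS {K : ℕ} (p : ℝ) (S : Finset (Fin K)) (σ : Equiv.Perm (Fin K)) : ℝ :=
  ∑ i ∈ S, oa p 1 S i * Real.log (oa p 1 S i / oa p σ S i)

/-- The adjacent transposition `σ̂_m` swapping (0-indexed) items `m` and `m+1`. -/
def adjSwap (K : ℕ) (m : ℕ) : Equiv.Perm (Fin K) :=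
  if h : m + 1 < K then Equiv.swap ⟨m, Nat.lt_of_succ_lt h⟩ ⟨m + 1, h⟩ else 1

/-- Lemma EC.5: closed form of `d_S(σ̂_m)`.  If both `m` and `m+1` belong to
`S` then `d_S(σ̂_m) = log(1/p)·p^{i−1}·(1−p)²/(1−p^{|S|})` with
`i = |{j ∈ S : j ≤ m}|`; otherwise `d_S(σ̂_m) = 0`.  (Items are 0-indexed.) -/
lemma swap_le_iff {K m : ℕ} (hm : m + 1 < K) {i j : Fin K}
    (h1 : ¬((i : ℕ) = m ∧ (j : ℕ) = m + 1)) (h2 : ¬((i : ℕ) = m + 1 ∧ (j : ℕ) = m)) :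
    Equiv.swap (⟨m, Nat.lt_of_succ_lt hm⟩ : Fin K) ⟨m + 1, hm⟩ j
      ≤ Equiv.swap (⟨m, Nat.lt_of_succ_lt hm⟩ : Fin K) ⟨m + 1, hm⟩ i ↔ j ≤ i := by
  simp only [Equiv.swap_apply_def, Fin.ext_iff, Fin.le_def]
  split_ifs <;> simp_all <;> omega

theorem stmt6 (p : ℝ) (hp0 : 0 < p) (hp1 : p < 1) (K : ℕ) (hK : 2 ≤ K)
    (S : Finset (Fin K)) (hS : 2 ≤ S.card) (m : ℕ) (hm : m + 1 < K) :
    (((⟨m, Nat.lt_of_succ_lt hm⟩ : Fin K) ∈ S ∧ (⟨m + 1, hm⟩ : Fin K) ∈ S) →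
      dS p S (adjSwap K m)
        = Real.log (1 / p) * p ^ ((S.filter fun j : Fin K => (j : ℕ) ≤ m).card - 1)
            * (1 - p) ^ 2 / (1 - p ^ S.card))
    ∧ (¬((⟨m, Nat.lt_of_succ_lt hm⟩ : Fin K) ∈ S ∧ (⟨m + 1, hm⟩ : Fin K) ∈ S) →
      dS p S (adjSwap K m) = 0) := by
  have hmK : m < K := Nat.lt_of_succ_lt hm
  set a : Fin K := ⟨m, hmK⟩ with ha_def
  set b : Fin K := ⟨m + 1, hm⟩ with hb_def
  have hσ : adjSwap K m = Equiv.swap a b := dif_pos hm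
  have hab : a ≠ b := by simp [ha_def, hb_def, Fin.ext_iff]
  have hD : (1 : ℝ) - p ^ S.card ≠ 0 := by
    have : p ^ S.card < 1 := pow_lt_one₀ hp0.le hp1 (by omega)
    linarith
  have hp : p ≠ 0 := hp0.ne'
  have h1p : (1 : ℝ) - p ≠ 0 := by linarith
  have hoa_ne : ∀ i, oa p 1 S i ≠ 0 := fun i =>
    div_ne_zero (mul_ne_zero h1p (pow_ne_zero _ hp)) hD
  have rank_eq : ∀ i : Fin K,
      (∀ j ∈ S, ¬((i : ℕ) = m ∧ (j : ℕ) = m + 1) ∧ ¬((i : ℕ) = m + 1 ∧ (j : ℕ) = m)) →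
      oa p (Equiv.swap a b) S i = oa p 1 S i := by
    intro i hij
    unfold oa
    have : (S.filter fun j => Equiv.swap a b j ≤ Equiv.swap a b i)
        = S.filter fun j => (1 : Equiv.Perm (Fin K)) j ≤ (1 : Equiv.Perm (Fin K)) i := by
      apply Finset.filter_congr
      intro j hj
      simpa using swap_le_iff hm (hij j hj).1 (hij j hj).2
    rw [this]
  have term_zero : ∀ i, oa p (Equiv.swap a b) S i = oa p 1 S i →
      oa p 1 S i * Real.log (oa p 1 S i / oa p (Equiv.swap a b) S i) = 0 := by
    intro i h
    rw [h, div_self (hoa_ne i), Real.log_one, mul_zero]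
  rw [hσ]
  constructor
  · rintro ⟨haS, hbS⟩
    set i₀ := (S.filter fun j => j ≤ a).card with hi0
    have ha_filter : a ∈ S.filter fun j => j ≤ a := Finset.mem_filter.mpr ⟨haS, le_refl a⟩
    have hi0pos : 1 ≤ i₀ := Finset.card_pos.mpr ⟨a, ha_filter⟩
    obtain ⟨k, hk⟩ : ∃ k, i₀ = k + 1 := ⟨i₀ - 1, by omega⟩
    have hfb : (S.filter fun j => j ≤ b) = insert b (S.filter fun j => j ≤ a) := by
      ext x
      simp only [Finset.mem_filter, Finset.mem_insert, Fin.le_def, Fin.ext_iff]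
      constructor
      · rintro ⟨hx1, hx2⟩
        by_cases hxb : (x : ℕ) = m + 1
        · exact Or.inl hxb
        · exact Or.inr ⟨hx1, by show (x : ℕ) ≤ m; have : (x : ℕ) ≤ m + 1 := hx2; omega⟩
      · rintro (h | ⟨hx1, hx2⟩)
        · have : x = b := Fin.ext h
          subst this
          exact ⟨hbS, le_refl _⟩
        · refine ⟨hx1, ?_⟩
          simp [ha_def, hb_def] at *
          omega
    have hbnot : b ∉ S.filter fun j => j ≤ a := by
      simp [Finset.mem_filter, Fin.le_def, ha_def, hb_def]
    have hcard_b : (S.filter fun j => j ≤ b).card = i₀ + 1 := by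
      rw [hfb, Finset.card_insert_of_notMem hbnot]
    have hfa' : (S.filter fun j => Equiv.swap a b j ≤ Equiv.swap a b a)
        = S.filter fun j => j ≤ b := by
      apply Finset.filter_congr
      intro j hj
      simp only [Equiv.swap_apply_left, Equiv.swap_apply_def, Fin.le_def, Fin.ext_iff]
      split_ifs <;> simp_all <;> omega
    have hba : (b : ℕ) ≤ (a : ℕ) ↔ False := by simp [ha_def, hb_def]
    have hfb' : (S.filter fun j => Equiv.swap a b j ≤ Equiv.swap a b b)
        = (S.filter fun j => j ≤ b).erase a := by
      ext x
      rw [Finset.mem_erase, Finset.mem_filter, Finset.mem_filter]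
      constructor
      · rintro ⟨hxS, hle⟩
        rw [Equiv.swap_apply_right] at hle
        rcases eq_or_ne x a with rfl | hxa
        · rw [Equiv.swap_apply_left, Fin.le_def, hba] at hle
          exact hle.elim
        · rcases eq_or_ne x b with rfl | hxb
          · exact ⟨hab.symm, hxS, le_refl _⟩
          · rw [Equiv.swap_apply_of_ne_of_ne hxa hxb] at hle
            refine ⟨hxa, hxS, le_trans hle ?_⟩
            simp [Fin.le_def, ha_def, hb_def]
      · rintro ⟨hxa, hxS, hle⟩
        refine ⟨hxS, ?_⟩
        rw [Equiv.swap_apply_right]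
        rcases eq_or_ne x b with rfl | hxb
        · rw [Equiv.swap_apply_right]
        · rw [Equiv.swap_apply_of_ne_of_ne hxa hxb]
          rw [Fin.le_def] at hle ⊢
          have h1 : (x : ℕ) ≠ m + 1 := fun h => hxb (Fin.ext h)
          have h2 : (x : ℕ) ≤ m + 1 := by simpa [hb_def] using hle
          simp [ha_def]
          omega
    have hamem : a ∈ S.filter fun j => j ≤ b := by
      simp [Finset.mem_filter, Fin.le_def, ha_def, hb_def, haS]
      exact haS
    have hcard_σa : (S.filter fun j => Equiv.swap a b j ≤ Equiv.swap a b a).card = i₀ + 1 := by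
      rw [hfa', hcard_b]
    have hcard_σb : (S.filter fun j => Equiv.swap a b j ≤ Equiv.swap a b b).card = i₀ := by
      rw [hfb', Finset.card_erase_of_mem hamem, hcard_b]
      omega
    have e1 : oa p 1 S a = (1 - p) * p ^ k / (1 - p ^ S.card) := by
      unfold oa
      simp only [Equiv.Perm.one_apply]
      change (1 - p) * p ^ (i₀ - 1) / (1 - p ^ S.card) = _
      rw [hk]
      simp
    have e2 : oa p (Equiv.swap a b) S a = (1 - p) * p ^ (k + 1) / (1 - p ^ S.card) := by
      unfold oa
      rw [hcard_σa, hk]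
      simp
    have e3 : oa p 1 S b = (1 - p) * p ^ (k + 1) / (1 - p ^ S.card) := by
      unfold oa
      simp only [Equiv.Perm.one_apply]
      change (1 - p) * p ^ ((S.filter fun j => j ≤ b).card - 1) / (1 - p ^ S.card) = _
      rw [hcard_b, hk]
      simp
    have e4 : oa p (Equiv.swap a b) S b = (1 - p) * p ^ k / (1 - p ^ S.card) := by
      unfold oa
      rw [hcard_σb, hk]
      simp
    have hexp : (S.filter fun j : Fin K => (j : ℕ) ≤ m).card - 1 = k := by
      have : (S.filter fun j : Fin K => (j : ℕ) ≤ m) = S.filter fun j => j ≤ a := by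
        apply Finset.filter_congr
        intro j _
        simp [Fin.le_def, ha_def]
      rw [this, ← hi0, hk]
      omega
    unfold dS
    rw [Finset.sum_eq_add_of_mem a b haS hbS hab (by
      rintro c hc ⟨hca, hcb⟩
      apply term_zero
      apply rank_eq
      intro j hj
      constructor
      · rintro ⟨h1, -⟩
        exact hca (Fin.ext h1)
      · rintro ⟨h1, -⟩
        exact hcb (Fin.ext h1))]
    rw [e1, e2, e3, e4, hexp]
    have hr1 : ((1 - p) * p ^ k / (1 - p ^ S.card)) / ((1 - p) * p ^ (k + 1) / (1 - p ^ S.card))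
        = 1 / p := by
      rw [pow_succ]
      field_simp
    have hr2 : ((1 - p) * p ^ (k + 1) / (1 - p ^ S.card)) / ((1 - p) * p ^ k / (1 - p ^ S.card))
        = p := by
      rw [pow_succ]
      field_simp
    rw [hr1, hr2, show Real.log p = -Real.log (1 / p) by rw [one_div, Real.log_inv, neg_neg]]
    ring
  · intro hnot
    unfold dS
    apply Finset.sum_eq_zero
    intro i hi
    apply term_zero
    apply rank_eq
    intro j hj
    constructor
    · rintro ⟨h1, h2⟩
      exact hnot ⟨(Fin.ext h1.symm : a = i) ▸ hi, (Fin.ext h2.symm : b = j) ▸ hj⟩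
    · rintro ⟨h1, h2⟩
      exact hnot ⟨(Fin.ext h2.symm : a = j) ▸ hj, (Fin.ext h1.symm : b = i) ▸ hi⟩
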